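/- For any odd prime p and any integer d > p², the ℚ-linear span of the set {θ^{(p,d)}_{a,b} : a, b ∈ ℤ}, viewed inside the ℚ-vector space ℚ[[q]] of formal power series, has dimension exactly (p+1)²/4. -/

import Mathlib

noncomputable section

def Qform (d : ℕ) (x y : ℤ) : ℤ := x ^ 2 + x * y + (d : ℤ) * y ^ 2

def cosetTheta (p d : ℕ) (a b : ℤ) : PowerSeries ℤ :=
  PowerSeries.mk fun k =>
    (Set.ncard {mn : ℤ × ℤ |
      Qform d ((p : ℤ) * mn.1 + a) ((p : ℤ) * mn.2 + b) = (k : ℤ)} : ℤ)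

def cosetThetaQ (p d : ℕ) (a b : ℤ) : PowerSeries ℚ :=
  PowerSeries.map (Int.castRingHom ℚ) (cosetTheta p d a b)

namespace ThetaProof

lemma int_eq_zero_of_bounds {P n : ℤ} (hP : 0 < P) (h1 : -P < P * n) (h2 : P * n < P) : n = 0 := by
  rcases lt_trichotomy n 0 with h | h | h
  · exfalso
    have h3 : n ≤ -1 := by omega
    have h4 : P * n ≤ P * (-1) := mul_le_mul_of_nonneg_left h3 hP.le
    have h5 : P * (-1) = -P := by ring
    linarith
  · exact h
  · exfalso
    have h3 : 1 ≤ n := h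
    have h4 : P * 1 ≤ P * n := mul_le_mul_of_nonneg_left h3 hP.le
    have h5 : P * 1 = P := by ring
    linarith

lemma int_eq_zero_or_neg_one {P n : ℤ} (hP : 0 < P) (h1 : -P ≤ P * n) (h2 : P * n ≤ 0) :
    n = 0 ∨ n = -1 := by
  rcases lt_trichotomy n (-1) with h | h | h
  · exfalso
    have h3 : n ≤ -2 := by omega
    have h4 : P * n ≤ P * (-2) := mul_le_mul_of_nonneg_left h3 hP.le
    have h5 : P * (-2) = -P - P := by ring
    linarith
  · right; exact h
  · rcases lt_trichotomy n 0 with h' | h' | h'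
    · exfalso; omega
    · left; exact h'
    · exfalso
      have h3 : 1 ≤ n := h'
      have h4 : P * 1 ≤ P * n := mul_le_mul_of_nonneg_left h3 hP.le
      have h5 : P * 1 = P := by ring
      linarith

lemma ncard_preimage_equiv {α : Type*} (e : α ≃ α) (S : Set α) :
    (⇑e ⁻¹' S).ncard = S.ncard := by
  have h : ⇑e ⁻¹' S = ⇑e.symm '' S := by
    rw [Equiv.image_eq_preimage_symm, Equiv.symm_symm]
  rw [h, Set.ncard_image_of_injective _ e.symm.injective]

lemma theta_congr (p d : ℕ) (a b a' b' : ℤ) (e : (ℤ × ℤ) ≃ (ℤ × ℤ))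
    (h : ∀ mn : ℤ × ℤ, Qform d ((p : ℤ) * (e mn).1 + a) ((p : ℤ) * (e mn).2 + b)
        = Qform d ((p : ℤ) * mn.1 + a') ((p : ℤ) * mn.2 + b')) :
    cosetTheta p d a' b' = cosetTheta p d a b := by
  ext k
  simp only [cosetTheta, PowerSeries.coeff_mk]
  congr 1
  have hset : {mn : ℤ × ℤ | Qform d ((p : ℤ) * mn.1 + a') ((p : ℤ) * mn.2 + b') = (k : ℤ)}
      = ⇑e ⁻¹' {mn : ℤ × ℤ | Qform d ((p : ℤ) * mn.1 + a) ((p : ℤ) * mn.2 + b) = (k : ℤ)} := by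
    ext mn
    simp only [Set.mem_setOf_eq, Set.mem_preimage, h mn]
  rw [hset, ncard_preimage_equiv]

lemma theta_shift (p d : ℕ) (a b u v : ℤ) :
    cosetTheta p d (a + p * u) (b + p * v) = cosetTheta p d a b := by
  refine theta_congr p d a b _ _ ⟨fun mn => (mn.1 + u, mn.2 + v), fun mn => (mn.1 - u, mn.2 - v),
    fun mn => by simp, fun mn => by simp⟩ (fun mn => ?_)
  simp only [Equiv.coe_fn_mk, Qform]
  ring

lemma theta_neg (p d : ℕ) (a b : ℤ) :
    cosetTheta p d (-a) (-b) = cosetTheta p d a b := by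
  refine theta_congr p d a b _ _ ⟨fun mn => (-mn.1, -mn.2), fun mn => (-mn.1, -mn.2),
    fun mn => by simp, fun mn => by simp⟩ (fun mn => ?_)
  simp only [Equiv.coe_fn_mk, Qform]
  ring

lemma theta_flip (p d : ℕ) (a b : ℤ) :
    cosetTheta p d (-a - b) b = cosetTheta p d a b := by
  refine theta_congr p d a b _ _ ⟨fun mn => (-mn.1 - mn.2, mn.2), fun mn => (-mn.1 - mn.2, mn.2),
    fun mn => by simp, fun mn => by simp⟩ (fun mn => ?_)
  simp only [Equiv.coe_fn_mk, Qform]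
  ring


lemma Qform_nonneg {d : ℕ} (hd : 1 ≤ d) (x y : ℤ) : 0 ≤ Qform d x y := by
  have hd' : (1 : ℤ) ≤ (d : ℤ) := by exact_mod_cast hd
  simp only [Qform]
  nlinarith [sq_nonneg (2 * x + y), sq_nonneg y]

lemma sols_finite (p d : ℕ) (hp : 0 < p) (hd : 1 ≤ d) (a b : ℤ) (k : ℤ) :
    {mn : ℤ × ℤ | Qform d ((p : ℤ) * mn.1 + a) ((p : ℤ) * mn.2 + b) = k}.Finite := by
  have hd' : (1 : ℤ) ≤ (d : ℤ) := by exact_mod_cast hd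
  have h1 : {xy : ℤ × ℤ | Qform d xy.1 xy.2 = k}.Finite := by
    rcases lt_or_ge k 0 with hk | hk
    · convert Set.finite_empty
      ext ⟨X, Y⟩
      simp only [Set.mem_setOf_eq, Set.mem_empty_iff_false, iff_false]
      intro h
      have := Qform_nonneg hd X Y
      omega
    · apply Set.Finite.subset (Set.finite_Icc ((-(k + 1), -(k + 1)) : ℤ × ℤ) ((k + 1, k + 1) : ℤ × ℤ))
      rintro ⟨X, Y⟩ h
      simp only [Set.mem_setOf_eq, Qform] at h
      have hX2 : X ^ 2 ≤ 2 * k := by nlinarith [sq_nonneg (X + Y), sq_nonneg Y]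
      have hY2 : Y ^ 2 ≤ 2 * k := by nlinarith [sq_nonneg (X + Y), sq_nonneg X, sq_nonneg Y]
      have hX : -(k + 1) ≤ X ∧ X ≤ k + 1 :=
        abs_le_of_sq_le_sq' (by nlinarith) (by omega)
      have hY : -(k + 1) ≤ Y ∧ Y ≤ k + 1 :=
        abs_le_of_sq_le_sq' (by nlinarith) (by omega)
      simp only [Set.mem_Icc, Prod.le_def]
      exact ⟨⟨hX.1, hY.1⟩, ⟨hX.2, hY.2⟩⟩
  have h2 : {mn : ℤ × ℤ | Qform d ((p : ℤ) * mn.1 + a) ((p : ℤ) * mn.2 + b) = k}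
      = (fun mn : ℤ × ℤ => ((p : ℤ) * mn.1 + a, (p : ℤ) * mn.2 + b)) ⁻¹'
        {xy : ℤ × ℤ | Qform d xy.1 xy.2 = k} := rfl
  rw [h2]
  apply Set.Finite.preimage _ h1
  intro u _ v _ huv
  have hp' : (p : ℤ) ≠ 0 := by exact_mod_cast hp.ne'
  simp only [Prod.mk.injEq] at huv
  have h3 : (p : ℤ) * u.1 = (p : ℤ) * v.1 := by linarith [huv.1]
  have h4 : (p : ℤ) * u.2 = (p : ℤ) * v.2 := by linarith [huv.2]
  exact Prod.ext (mul_left_cancel₀ hp' h3) (mul_left_cancel₀ hp' h4)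

/-- The representative `x`-coordinate. -/
def repX (i j : ℕ) : ℤ := (i : ℤ) - (j : ℤ) / 2

lemma key1 {p d : ℕ} (hd : ((p : ℤ)) ^ 2 < (d : ℤ)) {x₀ y₀ X Y : ℤ}
    (ht0 : 0 ≤ 2 * x₀ + y₀) (ht1 : 2 * x₀ + y₀ ≤ (p : ℤ))
    (hQ : Qform d X Y = Qform d x₀ y₀) : Y ^ 2 ≤ y₀ ^ 2 := by
  simp only [Qform] at hQ
  by_contra hcon
  push_neg at hcon
  have h1 : y₀ ^ 2 + 1 ≤ Y ^ 2 := hcon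
  have ht2 : (2 * x₀ + y₀) ^ 2 ≤ (p : ℤ) ^ 2 := by nlinarith
  have hd0 : (0 : ℤ) ≤ 4 * (d : ℤ) - 1 := by nlinarith [sq_nonneg ((p : ℤ))]
  have heq : (4 * (d : ℤ) - 1) * (Y ^ 2 - y₀ ^ 2) = (2 * x₀ + y₀) ^ 2 - (2 * X + Y) ^ 2 := by
    linear_combination 4 * hQ
  have h2 : (4 * (d : ℤ) - 1) * 1 ≤ (4 * (d : ℤ) - 1) * (Y ^ 2 - y₀ ^ 2) :=
    mul_le_mul_of_nonneg_left (by linarith) hd0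
  nlinarith [sq_nonneg (2 * X + Y), sq_nonneg ((p : ℤ))]

lemma key2 {d : ℕ} {x₀ y₀ X Y : ℤ} (hQ : Qform d X Y = Qform d x₀ y₀) (hY : Y = y₀) :
    X = x₀ ∨ X = -x₀ - y₀ := by
  subst hY
  simp only [Qform] at hQ
  have h0 : (X - x₀) * (X + x₀ + Y) = 0 := by linear_combination hQ
  rcases mul_eq_zero.mp h0 with h | h
  · left; linarith
  · right; linarith


lemma entry_empty {p d : ℕ} {r : ℕ} (hpr : p = 2 * r + 1) (hd : ((p : ℤ)) ^ 2 < (d : ℤ))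
    {i j i' j' : ℕ} (hi : i ≤ r) (hj : j ≤ r) (hi' : i' ≤ r) (hj' : j' ≤ r)
    (hne : ¬(i' = i ∧ j' = j)) (hjj : j ≤ j') :
    {mn : ℤ × ℤ | Qform d ((p : ℤ) * mn.1 + repX i' j') ((p : ℤ) * mn.2 + (j' : ℤ))
      = Qform d (repX i j) ((j : ℤ))} = ∅ := by
  have hpZ : (p : ℤ) = 2 * (r : ℤ) + 1 := by exact_mod_cast congrArg (Nat.cast : ℕ → ℤ) hpr
  have hP : (0 : ℤ) < (p : ℤ) := by omega
  have hiZ : (i : ℤ) ≤ (r : ℤ) := by exact_mod_cast hi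
  have hjZ : (j : ℤ) ≤ (r : ℤ) := by exact_mod_cast hj
  have hiZ' : (i' : ℤ) ≤ (r : ℤ) := by exact_mod_cast hi'
  have hjZ' : (j' : ℤ) ≤ (r : ℤ) := by exact_mod_cast hj'
  ext ⟨m, n⟩
  simp only [Set.mem_setOf_eq, Set.mem_empty_iff_false, iff_false]
  intro hQ
  have ht0 : 0 ≤ 2 * repX i j + (j : ℤ) := by simp only [repX]; omega
  have ht1 : 2 * repX i j + (j : ℤ) ≤ (p : ℤ) := by simp only [repX]; omega
  have hY2 := key1 hd ht0 ht1 hQ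
  have hY := abs_le_of_sq_le_sq' hY2 (by positivity : (0 : ℤ) ≤ (j : ℤ))
  have e1 : (p : ℤ) * n = ((p : ℤ) * n + (j' : ℤ)) - (j' : ℤ) := by ring
  have hn : n = 0 := by
    apply int_eq_zero_of_bounds hP
    · linarith [hY.1]
    · linarith [hY.2]
  rw [hn] at hQ hY hY2
  simp only [mul_zero, zero_add] at hQ hY hY2
  have hj'j : (j' : ℤ) ≤ (j : ℤ) := hY.2
  have hjj' : j' = j := by
    have : (j : ℤ) ≤ (j' : ℤ) := by exact_mod_cast hjj
    exact_mod_cast le_antisymm hj'j this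
  subst hjj'
  have hii : i' ≠ i := fun h => hne ⟨h, rfl⟩
  rcases key2 hQ rfl with h | h
  · have e2 : (p : ℤ) * m = (i : ℤ) - (i' : ℤ) := by
      simp only [repX] at h; linarith
    have hm : m = 0 := by
      apply int_eq_zero_of_bounds hP <;> rw [e2] <;> omega
    rw [hm, mul_zero] at e2
    have : (i' : ℤ) = (i : ℤ) := by omega
    exact hii (by exact_mod_cast this)
  · have e3 : (p : ℤ) * m = -((i : ℤ) + (i' : ℤ) + ((j' : ℤ) - 2 * ((j' : ℤ) / 2))) := by
      simp only [repX] at h; linarith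
    have hm : m = 0 ∨ m = -1 := by
      apply int_eq_zero_or_neg_one hP <;> rw [e3] <;> omega
    rcases hm with hm | hm <;> rw [hm] at e3
    · simp only [mul_zero] at e3
      have : (i' : ℤ) = (i : ℤ) := by omega
      exact hii (by exact_mod_cast this)
    · have : (i' : ℤ) = (i : ℤ) := by omega
      exact hii (by exact_mod_cast this)

lemma diag_mem {p d : ℕ} (i j : ℕ) :
    ((0, 0) : ℤ × ℤ) ∈ {mn : ℤ × ℤ | Qform d ((p : ℤ) * mn.1 + repX i j)
      ((p : ℤ) * mn.2 + (j : ℤ)) = Qform d (repX i j) ((j : ℤ))} := by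
  simp [Set.mem_setOf_eq]


lemma reduce_final {p : ℕ} (d : ℕ) {r : ℕ} (hpr : p = 2 * r + 1) (a2 jZ : ℤ)
    (hj0 : 0 ≤ jZ) (hjr : jZ ≤ (r : ℤ)) (h0 : 0 ≤ 2 * a2 + jZ) (h1 : 2 * a2 + jZ ≤ (p : ℤ)) :
    ∃ i j : ℕ, i ≤ r ∧ j ≤ r ∧
      cosetTheta p d a2 jZ = cosetTheta p d (repX i j) (j : ℤ) := by
  have hpZ : (p : ℤ) = 2 * (r : ℤ) + 1 := by exact_mod_cast congrArg (Nat.cast : ℕ → ℤ) hpr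
  refine ⟨(a2 + jZ / 2).toNat, jZ.toNat, by omega, by omega, ?_⟩
  have h2 : repX (a2 + jZ / 2).toNat jZ.toNat = a2 := by simp only [repX]; omega
  have h3 : ((jZ.toNat : ℕ) : ℤ) = jZ := by omega
  rw [h2, h3]

lemma reduce (p d : ℕ) {r : ℕ} (hpr : p = 2 * r + 1) (a b : ℤ) :
    ∃ i j : ℕ, i ≤ r ∧ j ≤ r ∧
      cosetTheta p d a b = cosetTheta p d (repX i j) (j : ℤ) := by
  have hpZ : (p : ℤ) = 2 * (r : ℤ) + 1 := by exact_mod_cast congrArg (Nat.cast : ℕ → ℤ) hpr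
  have hP : (0 : ℤ) < (p : ℤ) := by omega
  -- Step A : reduce b to jZ ∈ [0, r]
  set b0 := b % (p : ℤ) with hb0def
  have hb0 : 0 ≤ b0 ∧ b0 < (p : ℤ) := ⟨Int.emod_nonneg b hP.ne', Int.emod_lt_of_pos b hP⟩
  have h1 : cosetTheta p d a b0 = cosetTheta p d a b := by
    have := theta_shift p d a b 0 (-(b / (p : ℤ)))
    rwa [show a + (p : ℤ) * 0 = a by ring,
      show b + (p : ℤ) * (-(b / (p : ℤ))) = b0 by rw [hb0def, Int.emod_def]; ring] at this
  have stepA : ∃ a1 jZ : ℤ, 0 ≤ jZ ∧ jZ ≤ (r : ℤ) ∧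
      cosetTheta p d a1 jZ = cosetTheta p d a b := by
    by_cases hc : b0 ≤ (r : ℤ)
    · exact ⟨a, b0, hb0.1, hc, h1⟩
    · refine ⟨-a, (p : ℤ) - b0, by omega, by omega, ?_⟩
      have h2 := theta_neg p d a b0
      have h3 := theta_shift p d (-a) (-b0) 0 1
      rw [show -a + (p : ℤ) * 0 = -a by ring, show -b0 + (p : ℤ) * 1 = (p : ℤ) - b0 by ring] at h3
      rw [h3, h2, h1]
  obtain ⟨a1, jZ, hj0, hjr, hA⟩ := stepA
  -- Step B : reduce a1
  set t := 2 * a1 + jZ with htdef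
  set q := t / (2 * (p : ℤ)) with hqdef
  set T := t % (2 * (p : ℤ)) with hTdef
  have hT : 0 ≤ T ∧ T < 2 * (p : ℤ) :=
    ⟨Int.emod_nonneg t (by omega), Int.emod_lt_of_pos t (by omega)⟩
  set a2 := a1 - (p : ℤ) * q with ha2def
  have h2a : 2 * a2 + jZ = T := by
    rw [ha2def, hTdef, Int.emod_def, ← hqdef]; ring
  have hB : cosetTheta p d a2 jZ = cosetTheta p d a1 jZ := by
    have := theta_shift p d a1 jZ (-q) 0
    rwa [show a1 + (p : ℤ) * -q = a2 by rw [ha2def]; ring,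
      show jZ + (p : ℤ) * 0 = jZ by ring] at this
  by_cases hTp : T ≤ (p : ℤ)
  · obtain ⟨i, j, hi, hj, hfin⟩ := reduce_final d hpr a2 jZ hj0 hjr (by omega) (by omega)
    exact ⟨i, j, hi, hj, by rw [← hA, ← hB, hfin]⟩
  · set a3 := -a2 - jZ + (p : ℤ) with ha3def
    have hC : cosetTheta p d a3 jZ = cosetTheta p d a2 jZ := by
      have hflip := theta_flip p d a2 jZ
      have hsh := theta_shift p d (-a2 - jZ) jZ 1 0
      rw [show -a2 - jZ + (p : ℤ) * 1 = a3 by rw [ha3def]; ring,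
        show jZ + (p : ℤ) * 0 = jZ by ring] at hsh
      rw [hsh, hflip]
    have h3a : 2 * a3 + jZ = 2 * (p : ℤ) - T := by rw [ha3def]; omega
    obtain ⟨i, j, hi, hj, hfin⟩ := reduce_final d hpr a3 jZ hj0 hjr (by omega) (by omega)
    exact ⟨i, j, hi, hj, by rw [← hA, ← hB, ← hC, hfin]⟩


lemma coeff_thetaQ (p d : ℕ) (a b : ℤ) (K : ℕ) :
    (PowerSeries.coeff K) (cosetThetaQ p d a b)
      = ((Set.ncard {mn : ℤ × ℤ |
          Qform d ((p : ℤ) * mn.1 + a) ((p : ℤ) * mn.2 + b) = (K : ℤ)} : ℤ) : ℚ) := by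
  simp [cosetThetaQ, PowerSeries.coeff_map, cosetTheta, PowerSeries.coeff_mk]

/-- The family of representative theta series. -/
def gfun (p d r : ℕ) : (Fin (r + 1) × Fin (r + 1)) → PowerSeries ℚ :=
  fun ij => cosetThetaQ p d (repX (ij.1 : ℕ) (ij.2 : ℕ)) (((ij.2 : ℕ) : ℤ))

lemma gfun_li (p d r : ℕ) (hpr : p = 2 * r + 1) (hd : ((p : ℤ)) ^ 2 < (d : ℤ)) :
    LinearIndependent ℚ (gfun p d r) := by
  have hp0 : 0 < p := by omega
  have hpZ : (p : ℤ) = 2 * (r : ℤ) + 1 := by exact_mod_cast congrArg (Nat.cast : ℕ → ℤ) hpr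
  have hd1 : 1 ≤ d := by
    have h1 : (1 : ℤ) ≤ ((p : ℤ)) ^ 2 := by nlinarith
    have : (1 : ℤ) ≤ (d : ℤ) := by linarith
    exact_mod_cast this
  rw [Fintype.linearIndependent_iff]
  intro c hc
  suffices H : ∀ n : ℕ, ∀ ij : Fin (r + 1) × Fin (r + 1), (ij.2 : ℕ) = n → c ij = 0 by
    intro ij; exact H _ ij rfl
  intro n
  induction n using Nat.strong_induction_on with
  | _ n IH =>
    rintro ⟨i, j⟩ hjn
    have hjn' : (j : ℕ) = n := hjn
    have hN0 : 0 ≤ Qform d (repX (i : ℕ) (j : ℕ)) (((j : ℕ) : ℤ)) := Qform_nonneg hd1 _ _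
    set K := (Qform d (repX (i : ℕ) (j : ℕ)) (((j : ℕ) : ℤ))).toNat with hKdef
    have hKN : (K : ℤ) = Qform d (repX (i : ℕ) (j : ℕ)) (((j : ℕ) : ℤ)) :=
      Int.toNat_of_nonneg hN0
    have h0 := congrArg (PowerSeries.coeff K) hc
    rw [map_sum, map_zero] at h0
    have hterm : ∀ ij' : Fin (r + 1) × Fin (r + 1),
        (PowerSeries.coeff K) (c ij' • gfun p d r ij')
          = c ij' * (PowerSeries.coeff K) (gfun p d r ij') := by
      intro ij'; rw [LinearMap.map_smul, smul_eq_mul]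
    rw [Finset.sum_congr rfl fun ij' _ => hterm ij'] at h0
    rw [Finset.sum_eq_single ((i, j) : Fin (r + 1) × Fin (r + 1))] at h0
    · -- diagonal coefficient is positive
      have hcoeff : (PowerSeries.coeff K) (gfun p d r (i, j))
          = ((Set.ncard {mn : ℤ × ℤ |
              Qform d ((p : ℤ) * mn.1 + repX (i : ℕ) (j : ℕ)) ((p : ℤ) * mn.2 + ((j : ℕ) : ℤ))
                = (K : ℤ)} : ℤ) : ℚ) := coeff_thetaQ p d _ _ K
      rw [hKN] at hcoeff
      have hfin := sols_finite p d hp0 hd1 (repX (i : ℕ) (j : ℕ)) (((j : ℕ) : ℤ))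
        (Qform d (repX (i : ℕ) (j : ℕ)) (((j : ℕ) : ℤ)))
      have hpos : 0 < Set.ncard {mn : ℤ × ℤ |
          Qform d ((p : ℤ) * mn.1 + repX (i : ℕ) (j : ℕ)) ((p : ℤ) * mn.2 + ((j : ℕ) : ℤ))
            = Qform d (repX (i : ℕ) (j : ℕ)) (((j : ℕ) : ℤ))} :=
        (Set.ncard_pos hfin).mpr ⟨(0, 0), diag_mem (i : ℕ) (j : ℕ)⟩
      rw [hcoeff] at h0
      have hne0 : ((Set.ncard {mn : ℤ × ℤ |
          Qform d ((p : ℤ) * mn.1 + repX (i : ℕ) (j : ℕ)) ((p : ℤ) * mn.2 + ((j : ℕ) : ℤ))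
            = Qform d (repX (i : ℕ) (j : ℕ)) (((j : ℕ) : ℤ))} : ℤ) : ℚ) ≠ 0 := by
        exact_mod_cast hpos.ne'
      exact (mul_eq_zero.mp h0).resolve_right hne0
    · rintro ⟨i', j'⟩ - hne
      rcases lt_trichotomy ((j' : ℕ)) ((j : ℕ)) with hlt | heq | hgt
      · rw [IH (j' : ℕ) (by omega) (i', j') rfl, zero_mul]
      · have hcoeff : (PowerSeries.coeff K) (gfun p d r (i', j'))
            = ((Set.ncard {mn : ℤ × ℤ |
                Qform d ((p : ℤ) * mn.1 + repX (i' : ℕ) (j' : ℕ)) ((p : ℤ) * mn.2 + ((j' : ℕ) : ℤ))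
                  = (K : ℤ)} : ℤ) : ℚ) := coeff_thetaQ p d _ _ K
        rw [hKN] at hcoeff
        have hnePair : ¬((i' : ℕ) = (i : ℕ) ∧ (j' : ℕ) = (j : ℕ)) := by
          rintro ⟨h1, h2⟩
          exact hne (Prod.ext (Fin.ext h1) (Fin.ext h2))
        rw [entry_empty hpr hd (by omega) (by omega) (by omega) (by omega) hnePair (by omega)]
          at hcoeff
        rw [hcoeff]
        simp
      · have hcoeff : (PowerSeries.coeff K) (gfun p d r (i', j'))
            = ((Set.ncard {mn : ℤ × ℤ |
                Qform d ((p : ℤ) * mn.1 + repX (i' : ℕ) (j' : ℕ)) ((p : ℤ) * mn.2 + ((j' : ℕ) : ℤ))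
                  = (K : ℤ)} : ℤ) : ℚ) := coeff_thetaQ p d _ _ K
        rw [hKN] at hcoeff
        have hnePair : ¬((i' : ℕ) = (i : ℕ) ∧ (j' : ℕ) = (j : ℕ)) := by
          rintro ⟨h1, h2⟩; omega
        rw [entry_empty hpr hd (by omega) (by omega) (by omega) (by omega) hnePair (by omega)]
          at hcoeff
        rw [hcoeff]
        simp
    · intro h; exact absurd (Finset.mem_univ _) h

end ThetaProof

theorem stmt4 (p : ℕ) (hp : p.Prime) (hodd : Odd p) (d : ℕ) (hd : p ^ 2 < d) :
    Module.finrank ℚ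
      (Submodule.span ℚ (Set.range fun ab : ℤ × ℤ => cosetThetaQ p d ab.1 ab.2)) =
      (p + 1) ^ 2 / 4 := by
  obtain ⟨r, hr⟩ := hodd
  have hpr : p = 2 * r + 1 := by omega
  have hdZ : ((p : ℤ)) ^ 2 < (d : ℤ) := by exact_mod_cast hd
  have hrange : (Set.range fun ab : ℤ × ℤ => cosetThetaQ p d ab.1 ab.2)
      = Set.range (ThetaProof.gfun p d r) := by
    apply Set.Subset.antisymm
    · rintro x ⟨⟨a, b⟩, rfl⟩
      obtain ⟨i, j, hi, hj, hEq⟩ := ThetaProof.reduce p d hpr a b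
      refine ⟨(⟨i, by omega⟩, ⟨j, by omega⟩), ?_⟩
      show cosetThetaQ p d (ThetaProof.repX i j) ((j : ℤ)) = cosetThetaQ p d a b
      unfold cosetThetaQ
      rw [hEq]
    · rintro x ⟨⟨i, j⟩, rfl⟩
      exact ⟨(ThetaProof.repX (i : ℕ) (j : ℕ), (((j : ℕ)) : ℤ)), rfl⟩
  rw [hrange, finrank_span_eq_card (ThetaProof.gfun_li p d r hpr hdZ)]
  have hcard : Fintype.card (Fin (r + 1) × Fin (r + 1)) = (r + 1) * (r + 1) := by
    simp [Fintype.card_prod]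
  rw [hcard]
  have h4 : (p + 1) ^ 2 = 4 * ((r + 1) * (r + 1)) := by subst hpr; ring
  omega
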